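/- arXiv:2307.09849 — 2 statements merged into one kernel-verified Lean document; each statement's English description precedes it below -/
import Mathlib

section
/- Let A be a complex Banach *-algebra with identity and let a ∈ A. Then a is *-DMP if and only if there exists a projection e ∈ A such that a e = e a, a + e is invertible in A, and a e is nilpotent. -/
/-- Moore–Penrose inverse. -/
def IsMP {A : Type*} [Ring A] [StarRing A] (a x : A) : Prop :=
  a * x * a = a ∧ x * a * x = x ∧ star (a * x) = a * x ∧ star (x * a) = x * a

/-- Group inverse. -/
def IsGroupInv {A : Type*} [Ring A] (a x : A) : Prop :=
  a * x * a = a ∧ x * a * x = x ∧ a * x = x * a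

/-- `a` is *-DMP: some power `a ^ n` (`n ≥ 1`) has a common Moore–Penrose and group inverse. -/
def IsStarDMP {A : Type*} [Ring A] [StarRing A] (a : A) : Prop :=
  ∃ n : ℕ, 1 ≤ n ∧ ∃ x : A, IsMP (a ^ n) x ∧ IsGroupInv (a ^ n) x

/-- `x` is the Drazin inverse of `a` (with some index `k`). -/
def IsDrazin {A : Type*} [Ring A] (a x : A) : Prop :=
  ∃ k : ℕ, x * a ^ (k + 1) = a ^ k ∧ a * x ^ 2 = x ∧ a * x = x * a

/-- `x` is the pseudo core inverse of `a`. -/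
def IsPCore {A : Type*} [Ring A] [StarRing A] (a x : A) : Prop :=
  ∃ k : ℕ, x * a ^ (k + 1) = a ^ k ∧ a * x ^ 2 = x ∧ star (a * x) = a * x

/-- EP element: common group and Moore–Penrose inverse. -/
def IsEP {A : Type*} [Ring A] [StarRing A] (a : A) : Prop :=
  ∃ x : A, IsMP a x ∧ IsGroupInv a x

/-- If `x` is a group inverse of `b` and `c` commutes with `b`, then `c` commutes with `x`. -/
private lemma gi_comm {A : Type*} [Ring A] {b x c : A} (h1 : b * x * b = b)
    (h2 : x * b * x = x) (h3 : b * x = x * b) (hc : c * b = b * c) : c * x = x * c := by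
  have hx1 : x * x * b = x := by rw [mul_assoc, ← h3, ← mul_assoc]; exact h2
  have hx2 : b * (x * x) = x := by rw [← mul_assoc, h3]; exact h2
  have hbb : b * (b * x) = b := by rw [h3, ← mul_assoc]; exact h1
  have e1 : x * c * (b * x) = x * c := by
    calc x * c * (b * x) = x * x * b * c * (b * x) := by rw [hx1]
      _ = x * x * (b * c) * (b * x) := by rw [mul_assoc (x * x)]
      _ = x * x * (c * b) * (b * x) := by rw [hc]
      _ = x * x * c * (b * (b * x)) := by
          rw [← mul_assoc (x * x), mul_assoc (x * x * c)]
      _ = x * x * c * b := by rw [hbb]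
      _ = x * x * (c * b) := by rw [mul_assoc (x * x)]
      _ = x * x * (b * c) := by rw [hc]
      _ = x * x * b * c := by rw [mul_assoc (x * x)]
      _ = x * c := by rw [hx1]
  have e2 : b * x * (c * x) = c * x := by
    calc b * x * (c * x) = b * x * (c * (b * (x * x))) := by rw [hx2]
      _ = b * x * (c * b * (x * x)) := by rw [← mul_assoc c b]
      _ = b * x * (b * c * (x * x)) := by rw [hc]
      _ = b * x * (b * (c * (x * x))) := by rw [mul_assoc b c]
      _ = b * x * b * (c * (x * x)) := by rw [mul_assoc (b * x)]
      _ = b * (c * (x * x)) := by rw [h1]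
      _ = b * c * (x * x) := by rw [mul_assoc b c]
      _ = c * b * (x * x) := by rw [hc]
      _ = c * (b * (x * x)) := by rw [mul_assoc c b]
      _ = c * x := by rw [hx2]
  calc c * x = b * x * (c * x) := e2.symm
    _ = x * b * (c * x) := by rw [h3]
    _ = x * (b * (c * x)) := by rw [mul_assoc]
    _ = x * (b * c * x) := by rw [mul_assoc b c]
    _ = x * (c * b * x) := by rw [hc]
    _ = x * (c * (b * x)) := by rw [mul_assoc c b]
    _ = x * c * (b * x) := by rw [mul_assoc x c]
    _ = x * c := e1

variable {A : Type*} [NormedRing A] [StarRing A] [NormedAlgebra ℂ A] [CompleteSpace A]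

theorem stmt2 (a : A) :
    IsStarDMP a ↔ ∃ e : A, (e * e = e ∧ star e = e) ∧ a * e = e * a ∧
      IsUnit (a + e) ∧ IsNilpotent (a * e) := by
  constructor
  · rintro ⟨n, hn, x, ⟨m1, m2, m3, m4⟩, g1, g2, g3⟩
    obtain ⟨m, rfl⟩ : ∃ m, n = m + 1 := ⟨n - 1, by omega⟩
    set b := a ^ (m + 1) with hb
    have hab : a * b = b * a := by rw [hb, ← pow_succ', pow_succ]
    have hax : a * x = x * a := gi_comm g1 g2 g3 hab
    have hpp : b * x * (b * x) = b * x := by rw [← mul_assoc, g1]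
    have hbbx : b * (b * x) = b := by rw [g3, ← mul_assoc, g1]
    have hbxx : b * x * x = x := by rw [g3]; exact g2
    have hee : (1 - b * x) * (1 - b * x) = 1 - b * x := by
      calc (1 - b * x) * (1 - b * x) = 1 - b * x - b * x + b * x * (b * x) := by noncomm_ring
        _ = 1 - b * x := by rw [hpp]; abel
    have hse : star (1 - b * x) = 1 - b * x := by rw [star_sub, star_one, m3]
    have hapbx : a * (b * x) = b * x * a := by
      calc a * (b * x) = a * b * x := by rw [mul_assoc a b]
        _ = b * a * x := by rw [hab]
        _ = b * (a * x) := by rw [mul_assoc]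
        _ = b * (x * a) := by rw [hax]
        _ = b * x * a := by rw [mul_assoc b x]
    have haea : a * (1 - b * x) = (1 - b * x) * a := by
      rw [mul_sub, sub_mul, mul_one, one_mul, hapbx]
    have hbe : b * (1 - b * x) = 0 := by rw [mul_sub, mul_one, hbbx, sub_self]
    have hex : (1 - b * x) * x = 0 := by rw [sub_mul, one_mul, hbxx, sub_self]
    have hxe : x * (1 - b * x) = 0 := by rw [mul_sub, mul_one, ← mul_assoc, g2, sub_self]
    have hnil : IsNilpotent (a * (1 - b * x)) := by
      refine ⟨m + 1, ?_⟩
      have hcm : Commute a (1 - b * x) := haea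
      rw [hcm.mul_pow, IsIdempotentElem.pow_succ_eq m hee, ← hb, hbe]
    have hun1 : IsUnit (1 + a * (1 - b * x)) := by
      have h := (hnil.neg).isUnit_one_sub
      rwa [sub_neg_eq_add] at h
    obtain ⟨U, hU⟩ := hun1
    have t1 : a * (x * a ^ m) = b * x := by
      rw [← mul_assoc, hax, mul_assoc, ← pow_succ', ← hb, ← g3]
    have t2 : (1 - b * x) * (x * a ^ m) = 0 := by rw [← mul_assoc, hex, zero_mul]
    have claim1 : (a + (1 - b * x)) * (x * a ^ m + (1 - b * x)) = 1 + a * (1 - b * x) := by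
      calc (a + (1 - b * x)) * (x * a ^ m + (1 - b * x))
          = a * (x * a ^ m) + a * (1 - b * x) +
            ((1 - b * x) * (x * a ^ m) + (1 - b * x) * (1 - b * x)) := by
            rw [add_mul, mul_add, mul_add]
        _ = b * x + a * (1 - b * x) + (0 + (1 - b * x)) := by rw [t1, t2, hee]
        _ = 1 + a * (1 - b * x) := by abel
    have s1 : x * a ^ m * a = b * x := by rw [mul_assoc, ← pow_succ, ← hb, ← g3]
    have s2 : x * a ^ m * (1 - b * x) = 0 := by
      have hcma : Commute a (1 - b * x) := haea
      have hcm : Commute (a ^ m) (1 - b * x) := hcma.pow_left m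
      rw [mul_assoc, hcm.eq, ← mul_assoc, hxe, zero_mul]
    have claim2 : (x * a ^ m + (1 - b * x)) * (a + (1 - b * x)) = 1 + a * (1 - b * x) := by
      calc (x * a ^ m + (1 - b * x)) * (a + (1 - b * x))
          = x * a ^ m * a + x * a ^ m * (1 - b * x) +
            ((1 - b * x) * a + (1 - b * x) * (1 - b * x)) := by
            rw [add_mul, mul_add, mul_add]
        _ = b * x + 0 + ((1 - b * x) * a + (1 - b * x)) := by rw [s1, s2, hee]
        _ = 1 + a * (1 - b * x) := by rw [← haea]; abel
    have hy : (a + (1 - b * x)) * (x * a ^ m + (1 - b * x)) * ↑U⁻¹ = 1 := by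
      rw [claim1, ← hU, Units.mul_inv]
    have hy' : (a + (1 - b * x)) * ((x * a ^ m + (1 - b * x)) * ↑U⁻¹) = 1 := by
      rw [← mul_assoc]; exact hy
    have hz : (↑U⁻¹ * (x * a ^ m + (1 - b * x))) * (a + (1 - b * x)) = 1 := by
      rw [mul_assoc, claim2, ← hU, Units.inv_mul]
    have heq : (↑U⁻¹ * (x * a ^ m + (1 - b * x)) : A)
        = (x * a ^ m + (1 - b * x)) * ↑U⁻¹ := left_inv_eq_right_inv hz hy'
    refine ⟨1 - b * x, ⟨hee, hse⟩, haea, ?_, hnil⟩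
    exact ⟨⟨a + (1 - b * x), (x * a ^ m + (1 - b * x)) * ↑U⁻¹, hy', heq ▸ hz⟩, rfl⟩
  · rintro ⟨e, ⟨hee, hse⟩, hae, hu, m, hm⟩
    obtain ⟨U, hU⟩ := hu
    have hcae : Commute a e := hae
    have h1 : (a + e) * ↑U⁻¹ = 1 := by rw [← hU]; exact U.mul_inv
    have h2 : (↑U⁻¹ : A) * (a + e) = 1 := by rw [← hU]; exact U.inv_mul
    have hcaU : Commute a (U : A) := by rw [hU]; exact (Commute.refl a).add_right hcae
    have hceU : Commute e (U : A) := by rw [hU]; exact hcae.symm.add_right (Commute.refl e)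
    have hwa : Commute a (↑U⁻¹ : A) := hcaU.units_inv_right
    have hwe : Commute e (↑U⁻¹ : A) := hceU.units_inv_right
    set w : A := ↑U⁻¹ with hwdef
    have h0 : (a * e) ^ (m + 1) = 0 := by rw [pow_succ, hm, zero_mul]
    have hne : a ^ (m + 1) * e = 0 := by
      have h := hcae.mul_pow (m + 1)
      rw [IsIdempotentElem.pow_succ_eq m hee] at h
      rw [← h]; exact h0
    have hc1 : Commute (a + e) (1 - e) :=
      (Commute.one_right (a + e)).sub_right (hcae.add_left (Commute.refl e))
    have hfe : (1 - e) * (1 - e) = 1 - e := by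
      calc (1 - e) * (1 - e) = 1 - e - e + e * e := by noncomm_ring
        _ = 1 - e := by rw [hee]; abel
    have hstep : (a + e) * (1 - e) = a * (1 - e) := by
      rw [add_mul, mul_sub e, mul_one, hee, sub_self, add_zero]
    have hca1e : Commute a (1 - e) := (Commute.one_right a).sub_right hcae
    have hkey : (a + e) ^ (m + 1) * (1 - e) = a ^ (m + 1) * (1 - e) := by
      have hl : ((a + e) * (1 - e)) ^ (m + 1) = (a + e) ^ (m + 1) * (1 - e) := by
        rw [hc1.mul_pow, IsIdempotentElem.pow_succ_eq m hfe]
      have hr : (a * (1 - e)) ^ (m + 1) = a ^ (m + 1) * (1 - e) := by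
        rw [hca1e.mul_pow, IsIdempotentElem.pow_succ_eq m hfe]
      rw [← hl, hstep, hr]
    have hwu : Commute w (a + e) := h2.trans h1.symm
    have hax : a ^ (m + 1) * (w ^ (m + 1) * (1 - e)) = 1 - e := by
      calc a ^ (m + 1) * (w ^ (m + 1) * (1 - e))
          = a ^ (m + 1) * w ^ (m + 1) * (1 - e) := by rw [mul_assoc]
        _ = w ^ (m + 1) * a ^ (m + 1) * (1 - e) := by
            rw [(hwa.pow_pow (m + 1) (m + 1)).eq]
        _ = w ^ (m + 1) * ((a + e) ^ (m + 1) * (1 - e)) := by rw [mul_assoc, ← hkey]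
        _ = w ^ (m + 1) * (a + e) ^ (m + 1) * (1 - e) := by rw [mul_assoc]
        _ = (w * (a + e)) ^ (m + 1) * (1 - e) := by
            rw [hwu.mul_pow]
        _ = 1 - e := by rw [h2, one_pow, one_mul]
    have hc2 : Commute (a ^ (m + 1)) (1 - e) := hca1e.pow_left (m + 1)
    have hcx : Commute (a ^ (m + 1)) (w ^ (m + 1) * (1 - e)) :=
      (hwa.pow_pow (m + 1) (m + 1)).mul_right hc2
    have hxa : w ^ (m + 1) * (1 - e) * a ^ (m + 1) = 1 - e := by rw [← hcx.eq, hax]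
    have hc3 : Commute (1 - e) (w ^ (m + 1)) :=
      ((Commute.one_left w).sub_left hwe).pow_right (m + 1)
    have p1 : a ^ (m + 1) * (w ^ (m + 1) * (1 - e)) * a ^ (m + 1) = a ^ (m + 1) := by
      rw [hax, ← hc2.eq, mul_sub, mul_one, hne, sub_zero]
    have p2 : w ^ (m + 1) * (1 - e) * a ^ (m + 1) * (w ^ (m + 1) * (1 - e))
        = w ^ (m + 1) * (1 - e) := by
      rw [hxa, ← mul_assoc, hc3.eq, mul_assoc, hfe]
    refine ⟨m + 1, Nat.succ_le_succ (Nat.zero_le m), w ^ (m + 1) * (1 - e),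
      ⟨p1, p2, ?_, ?_⟩, p1, p2, ?_⟩
    · rw [hax, star_sub, star_one, hse]
    · rw [hxa, star_sub, star_one, hse]
    · rw [hax, hxa]
end

section
/- Let A be a complex Banach *-algebra with identity, and let a, b ∈ A be *-DMP elements. If ab = ba and a^π a* b = a^π b a* (where a^π = 1 − a a^D), then a + b is *-DMP if and only if (a+b) a a^D is *-DMP. -/
section NC
variable {R : Type*} [Ring R]

lemma idem_pow {e : R} (he : e * e = e) : ∀ n : ℕ, e ^ (n + 1) = e
  | 0 => pow_one e
  | n + 1 => by rw [pow_succ, idem_pow he n, he]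

lemma isDrazin_of_groupInv {a x : R} (h : IsGroupInv a x) : IsDrazin a x := by
  obtain ⟨h1, h2, h3⟩ := h
  refine ⟨1, ?_, ?_, h3⟩
  · rw [pow_two, pow_one, ← mul_assoc, ← h3, h1]
  · rw [pow_two, ← mul_assoc, h3, h2]

lemma drazin_comm {a x c : R} (hd : IsDrazin a x) (hc : c * a = a * c) : c * x = x * c := by
  obtain ⟨k, hk, hx2, hcm⟩ := hd
  have hax : Commute a x := hcm
  have hca : Commute c a := hc
  -- x * a * x = x
  have hxax : x * a * x = x := by
    rw [← hcm, mul_assoc, ← pow_two, hx2]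
  -- e := a * x idempotent
  have he : (a * x) * (a * x) = a * x := by
    rw [mul_assoc, ← mul_assoc x a x, hxax]
  -- a^m * x^(m+1) = x
  have h1 : ∀ m : ℕ, a ^ m * x ^ (m + 1) = x := by
    intro m
    induction m with
    | zero => simpa using rfl
    | succ n ih =>
      rw [pow_succ' a, pow_succ x, mul_assoc, ← mul_assoc (a ^ n), ih, ← pow_two, hx2]
  have h2 : ∀ m : ℕ, x ^ (m + 1) * a ^ m = x := fun m => by
    rw [← (hax.pow_pow m (m + 1)).eq, h1]
  have hk' : a ^ (k + 1) * x = a ^ k := by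
    rw [← hk]; exact (hax.pow_left (k + 1)).eq
  have hpow : x ^ (k + 1) * a ^ (k + 1) = a * x := by
    rw [← hax.symm.mul_pow, ← hcm]; exact idem_pow he k
  have hpow2 : a ^ (k + 1) * x ^ (k + 1) = a * x := by
    rw [← hax.mul_pow]; exact idem_pow he k
  have xc_eq : x * c = (a * x) * (c * x) := by
    calc x * c = (x ^ (k + 1) * a ^ k) * c := by rw [h2]
    _ = x ^ (k + 1) * (a ^ k * c) := by rw [mul_assoc]
    _ = x ^ (k + 1) * (c * a ^ k) := by rw [(hca.pow_right k).eq]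
    _ = x ^ (k + 1) * (c * (a ^ (k + 1) * x)) := by rw [hk']
    _ = x ^ (k + 1) * ((c * a ^ (k + 1)) * x) := by rw [mul_assoc]
    _ = x ^ (k + 1) * ((a ^ (k + 1) * c) * x) := by rw [(hca.pow_right (k + 1)).eq]
    _ = (x ^ (k + 1) * a ^ (k + 1)) * (c * x) := by rw [← mul_assoc, ← mul_assoc, mul_assoc _ c x]
    _ = (a * x) * (c * x) := by rw [hpow]
  have cx_eq : c * x = (x * c) * (a * x) := by
    calc c * x = c * (a ^ k * x ^ (k + 1)) := by rw [h1]
    _ = (c * a ^ k) * x ^ (k + 1) := by rw [mul_assoc]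
    _ = (a ^ k * c) * x ^ (k + 1) := by rw [(hca.pow_right k).eq]
    _ = ((x * a ^ (k + 1)) * c) * x ^ (k + 1) := by rw [hk]
    _ = (x * (a ^ (k + 1) * c)) * x ^ (k + 1) := by rw [mul_assoc x]
    _ = (x * (c * a ^ (k + 1))) * x ^ (k + 1) := by rw [(hca.pow_right (k + 1)).eq]
    _ = (x * c) * (a ^ (k + 1) * x ^ (k + 1)) := by
        rw [← mul_assoc, mul_assoc (x * c)]
    _ = (x * c) * (a * x) := by rw [hpow2]
  have step : (a * x) * (x * c) = x * c := by
    calc (a * x) * (x * c) = (a * x) * ((a * x) * (c * x)) := by rw [← xc_eq]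
    _ = ((a * x) * (a * x)) * (c * x) := by noncomm_ring
    _ = (a * x) * (c * x) := by rw [he]
    _ = x * c := xc_eq.symm
  have h4 : x * c = (x * c) * (a * x) := by
    calc x * c = (a * x) * (c * x) := xc_eq
    _ = (a * x) * ((x * c) * (a * x)) := by rw [← cx_eq]
    _ = ((a * x) * (x * c)) * (a * x) := by noncomm_ring
    _ = (x * c) * (a * x) := by rw [step]
  exact cx_eq.trans h4.symm

end NC

section CR
variable {R : Type*} [CommRing R]

lemma idem_pow' {e : R} (he : e * e = e) : ∀ n : ℕ, e ^ (n + 1) = e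
  | 0 => pow_one e
  | n + 1 => by rw [pow_succ, idem_pow' he n, he]

lemma cdrazin_pow {a x : R} (hx2 : a * x ^ 2 = x) : ∀ m : ℕ, a ^ m * x ^ (m + 1) = x := by
  intro m
  induction m with
  | zero => simp
  | succ j ih => linear_combination (a * x) * ih + hx2

lemma cdrazin_unique {a x y : R} {kx ky : ℕ}
    (hx1 : x * a ^ (kx + 1) = a ^ kx) (hx2 : a * x ^ 2 = x)
    (hy1 : y * a ^ (ky + 1) = a ^ ky) (hy2 : a * y ^ 2 = y) : x = y := by
  have he : (a * x) * (a * x) = a * x := by linear_combination a * hx2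
  have hg : (a * y) * (a * y) = a * y := by linear_combination a * hy2
  have hxy : x = y * (a * x) := by
    have e1 : x = y * (a * x) ^ (ky + 1) := by
      linear_combination -(cdrazin_pow hx2 ky) - x ^ (ky + 1) * hy1
    rw [idem_pow' he ky] at e1; exact e1
  have hyx : y = x * (a * y) := by
    have e1 : y = x * (a * y) ^ (kx + 1) := by
      linear_combination -(cdrazin_pow hy2 kx) - y ^ (kx + 1) * hx1
    rw [idem_pow' hg kx] at e1; exact e1
  have he' : a * x = a * y := by
    have p1 : a * x = (a * y) * (a * x) := by linear_combination a * hxy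
    have p2 : a * y = (a * x) * (a * y) := by linear_combination a * hyx
    calc a * x = (a * y) * (a * x) := p1
    _ = (a * x) * (a * y) := mul_comm _ _
    _ = a * y := p2.symm
  linear_combination hxy + y * he' + hy2

lemma cpow_drazin {a x : R} {j : ℕ}
    (h1 : a ^ (j + 1) * x * a ^ (j + 1) = a ^ (j + 1)) (h2 : x * a ^ (j + 1) * x = x) :
    (a ^ j * x) * a ^ ((j + 1) + 1) = a ^ (j + 1) ∧ a * (a ^ j * x) ^ 2 = a ^ j * x :=
  ⟨by linear_combination h1, by linear_combination (a ^ j) * h2⟩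

lemma orth_pow_mul {u v : R} (h : u * v = 0) : ∀ j : ℕ, u ^ (j + 1) * v = 0 := fun j => by
  rw [pow_succ, mul_assoc, h, mul_zero]

lemma orth_add_pow {u v : R} (h : u * v = 0) :
    ∀ n : ℕ, (u + v) ^ (n + 1) = u ^ (n + 1) + v ^ (n + 1) := by
  intro n
  induction n with
  | zero => simp
  | succ j ih =>
    have h2 : v * u = 0 := by rw [mul_comm]; exact h
    calc (u + v) ^ (j + 2) = (u + v) ^ (j + 1) * (u + v) := by rw [pow_succ]
    _ = (u ^ (j + 1) + v ^ (j + 1)) * (u + v) := by rw [ih]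
    _ = u ^ (j + 2) + v ^ (j + 2) := by
        linear_combination orth_pow_mul h j + orth_pow_mul h2 j

lemma corner_core {a b aD y p π f0 f v : R} {k mm : ℕ}
    (hk : aD * a ^ (k + 1) = a ^ k) (haD2 : a * aD ^ 2 = aD)
    (hy1 : b ^ (mm + 1) * y * b ^ (mm + 1) = b ^ (mm + 1))
    (hp : p = a * aD) (hπ : π = 1 - p) (hf0 : f0 = b ^ (mm + 1) * y) (hf : f = f0 * π)
    (hv : v = (a + b) * π) :
    ∀ n : ℕ, (mm + 1) + (k + 1) ≤ n →
      ∃ t : R, v ^ n * t = f ∧ t * f = t ∧ v ^ n * f = v ^ n := by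
  have hp2 : p * p = p := by rw [hp]; linear_combination a * haD2
  have hπ2 : π * π = π := by rw [hπ]; linear_combination hp2
  have hf02 : f0 * f0 = f0 := by rw [hf0]; linear_combination y * hy1
  have hff : f * f = f := by rw [hf]; linear_combination (f0 * f0) * hπ2 + π * hf02
  have hπf : π * f = f := by rw [hf]; linear_combination f0 * hπ2
  have hNk : a ^ (k + 1) * π = 0 := by rw [hπ, hp]; linear_combination (-a) * hk
  have hNnil : (a * π) ^ (k + 1) = 0 := by rw [mul_pow, idem_pow' hπ2 k, hNk]
  have hBmf : (b * π) ^ (mm + 1) * f = (b * π) ^ (mm + 1) := by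
    rw [mul_pow, idem_pow' hπ2 mm, hf, hf0]
    linear_combination (b ^ (mm + 1) * b ^ (mm + 1) * y) * hπ2 + π * hy1
  have hvK : v ^ ((mm + 1) + (k + 1)) * f = v ^ ((mm + 1) + (k + 1)) := by
    rw [hv, add_mul, add_pow, Finset.sum_mul]
    refine Finset.sum_congr rfl ?_
    intro i hi
    by_cases hik : k + 1 ≤ i
    · have hz : (a * π) ^ i = 0 := by
        rw [← Nat.sub_add_cancel hik, pow_add, hNnil, mul_zero]
      rw [hz]; simp
    · have h0 : (mm + 1) + (k + 1) - i = (mm + 1) + ((mm + 1) + (k + 1) - i - (mm + 1)) := by omega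
      rw [h0, pow_add]
      linear_combination ((a * π) ^ i * (b * π) ^ ((mm + 1) + (k + 1) - i - (mm + 1)) *
        ((((mm + 1) + (k + 1)).choose i : R))) * hBmf
  intro n hn
  obtain ⟨n', rfl⟩ : ∃ n', n = n' + 1 := ⟨n - 1, by omega⟩
  set r := b ^ mm * y * f with hr
  set w := -(r * (a * π)) with hw
  set S := ∑ i ∈ Finset.range (k + 1), w ^ i with hS
  have hrf : r * f = r := by rw [hr]; linear_combination (b ^ mm * y) * hff
  have hfr : f * r = r := by rw [mul_comm]; exact hrf
  have hBr : (b * π) * r = f := by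
    rw [hr, hf, hf0]
    linear_combination (b ^ (mm + 1) * b ^ (mm + 1) * y * y) * hπ2 + (y * π) * hy1
  have hfw : f * w = w := by rw [hw]; linear_combination (-(a * π)) * hfr
  have hwnil : w ^ (k + 1) = 0 := by
    rw [hw, neg_pow, mul_pow, hNnil, mul_zero, mul_zero]
  have hSw : w * S = S - 1 := by
    have h := geom_sum_mul w (k + 1)
    rw [hwnil] at h
    linear_combination h
  have hfS : f * S = S - 1 + f := by
    rw [hS, geom_sum_succ]
    linear_combination (∑ i ∈ Finset.range k, w ^ i) * hfw
  have hvt : v * (r * S) = f := by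
    linear_combination (r * S) * hv + S * hBr + hfS - hSw - S * hw
  have ht1f : (r * S) * f = r * S := by
    linear_combination r * hfS + hrf
  refine ⟨(r * S) ^ (n' + 1), ?_, ?_, ?_⟩
  · rw [← mul_pow, hvt, idem_pow' hff n']
  · rw [pow_succ, mul_assoc, ht1f]
  · have h0 : n' + 1 = ((n' + 1) - ((mm + 1) + (k + 1))) + ((mm + 1) + (k + 1)) := by omega
    rw [h0, pow_add, mul_assoc, hvK]

lemma fwd_pack (a b aD y x : R) (k mm n0 : ℕ)
    (hk : aD * a ^ (k + 1) = a ^ k) (haD2 : a * aD ^ 2 = aD)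
    (hy1 : b ^ (mm + 1) * y * b ^ (mm + 1) = b ^ (mm + 1))
    (hx1 : ((a + b) * (a * aD)) ^ n0 * x * ((a + b) * (a * aD)) ^ n0 = ((a + b) * (a * aD)) ^ n0)
    (hx2 : x * ((a + b) * (a * aD)) ^ n0 * x = x)
    (hn0 : 1 ≤ n0) :
    ∃ n : ℕ, 1 ≤ n ∧ ∃ W F : R,
      (a + b) ^ n * W = ((a + b) * (a * aD)) ^ n0 * x + F ∧
      W * (a + b) ^ n = ((a + b) * (a * aD)) ^ n0 * x + F ∧
      (a + b) ^ n * W * (a + b) ^ n = (a + b) ^ n ∧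
      W * (a + b) ^ n * W = W ∧
      F = (b ^ (mm + 1) * y) * (1 - a * aD) := by
  obtain ⟨n0', rfl⟩ : ∃ q, n0 = q + 1 := ⟨n0 - 1, by omega⟩
  set s := a + b with hs
  set p := a * aD with hp
  set π := (1 : R) - p with hπ
  set f0 := b ^ (mm + 1) * y with hf0
  set f := f0 * π with hf
  set v := s * π with hv
  set u := s * p with hu
  set c := u ^ (n0' + 1) with hc
  set K := mm + k + 1 + 1 with hK
  set n := (n0' + 1) * K with hn
  have hKK : (mm + 1) + (k + 1) ≤ K := by rw [hK]; omega
  have hKn : (mm + 1) + (k + 1) ≤ n := by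
    rw [hn]; exact le_trans hKK (Nat.le_mul_of_pos_left K (by omega))
  have hn1 : 1 ≤ n := le_trans (by omega) hKn
  obtain ⟨n'', hneq⟩ : ∃ q, n = q + 1 := ⟨n - 1, by omega⟩
  obtain ⟨t, ht1, ht2, ht3⟩ :=
    corner_core (p := p) (π := π) (f0 := f0) (f := f) (v := v)
      hk haD2 hy1 hp hπ hf0 hf (by rw [hv, hs]) n hKn
  clear_value s p π f0 f v u c K n
  have hp2 : p * p = p := by rw [hp]; linear_combination a * haD2
  have huv0 : u * v = 0 := by
    rw [hu, hv, hπ]; linear_combination (-(s * s)) * hp2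
  have hsum : u + v = s := by rw [hu, hv, hπ]; ring
  have hC : s ^ n = u ^ n + v ^ n := by
    rw [hneq, ← hsum]; exact orth_add_pow huv0 n''
  have hE : (c * x) * (c * x) = c * x := by linear_combination x * hx1
  have hUc : u ^ n = c ^ K := by rw [hn, pow_mul, ← hc]
  have hUxK : u ^ n * x ^ K = c * x := by
    rw [hUc, ← mul_pow, hK]; exact idem_pow' hE (mm + k + 1)
  have hCU : (c * x) * u ^ n = u ^ n := by
    rw [hUc, hK]; linear_combination (c ^ (mm + k + 1)) * hx1
  have hxcxK : (c * x) * x ^ K = x ^ K := by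
    rw [hK]; linear_combination (x ^ (mm + k + 1)) * hx2
  have hufz : u * f = 0 := by
    rw [hu, hf, hπ]; linear_combination (-(s * f0)) * hp2
  have hunf : u ^ n * f = 0 := by rw [hneq]; exact orth_pow_mul hufz n''
  have hcf : c * f = 0 := by rw [hc]; exact orth_pow_mul hufz n0'
  have hut : u ^ n * t = 0 := by
    calc u ^ n * t = u ^ n * (t * f) := by rw [ht2]
    _ = (u ^ n * f) * t := by ring
    _ = 0 := by rw [hunf, zero_mul]
  have hct : c * t = 0 := by
    calc c * t = c * (t * f) := by rw [ht2]
    _ = (c * f) * t := by ring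
    _ = 0 := by rw [hcf, zero_mul]
  have hvu : v * u = 0 := by rw [mul_comm]; exact huv0
  have hvnc : v ^ n * c = 0 := by
    rw [hneq, hc]
    calc v ^ (n'' + 1) * u ^ (n0' + 1) = (v ^ (n'' + 1) * u) * u ^ n0' := by
          rw [pow_succ' u, ← mul_assoc]
    _ = 0 := by rw [orth_pow_mul hvu n'', zero_mul]
  have hvx : v ^ n * x = 0 := by
    calc v ^ n * x = v ^ n * (x * c * x) := by rw [hx2]
    _ = (v ^ n * c) * (x * x) := by ring
    _ = 0 := by rw [hvnc, zero_mul]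
  have hxv : x * v ^ n = 0 := by rw [mul_comm]; exact hvx
  have hvxK : v ^ n * x ^ K = 0 := by
    rw [mul_comm, hK]; exact orth_pow_mul hxv (mm + k + 1)
  have hfx : f * x = 0 := by
    calc f * x = f * (x * c * x) := by rw [hx2]
    _ = (c * f) * (x * x) := by ring
    _ = 0 := by rw [hcf, zero_mul]
  have hxf : x * f = 0 := by rw [mul_comm]; exact hfx
  have hfxK : f * x ^ K = 0 := by
    rw [mul_comm, hK]; exact orth_pow_mul hxf (mm + k + 1)
  have hft : f * t = t := by rw [mul_comm]; exact ht2
  have W1 : s ^ n * (x ^ K + t) = c * x + f := by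
    linear_combination (x ^ K + t) * hC + hUxK + hut + hvxK + ht1
  have W2 : (x ^ K + t) * s ^ n = c * x + f := by rw [mul_comm]; exact W1
  have W3' : (c * x + f) * s ^ n = s ^ n := by
    linear_combination (c * x + f - 1) * hC + hCU + x * hvnc + hunf + ht3
  have W4' : (c * x + f) * (x ^ K + t) = x ^ K + t := by
    linear_combination hxcxK + x * hct + hfxK + hft
  exact ⟨n, hn1, x ^ K + t, f, W1, W2, by rw [W1]; exact W3', by rw [W2]; exact W4', rfl⟩

lemma conv_pack (a b aD y z : R) (k mm n1 : ℕ)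
    (hk : aD * a ^ (k + 1) = a ^ k) (haD2 : a * aD ^ 2 = aD)
    (hy1 : b ^ (mm + 1) * y * b ^ (mm + 1) = b ^ (mm + 1))
    (hz1 : (a + b) ^ n1 * z * (a + b) ^ n1 = (a + b) ^ n1)
    (hz2 : z * (a + b) ^ n1 * z = z)
    (hn1 : 1 ≤ n1) :
    ∃ n : ℕ, 1 ≤ n ∧ ∃ W Q F : R,
      ((a + b) * (a * aD)) ^ n * W = Q - F ∧
      W * ((a + b) * (a * aD)) ^ n = Q - F ∧
      ((a + b) * (a * aD)) ^ n * W * ((a + b) * (a * aD)) ^ n = ((a + b) * (a * aD)) ^ n ∧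
      W * ((a + b) * (a * aD)) ^ n * W = W ∧
      Q = (a + b) ^ n1 * z ∧ F = (b ^ (mm + 1) * y) * (1 - a * aD) := by
  obtain ⟨n1', rfl⟩ : ∃ q, n1 = q + 1 := ⟨n1 - 1, by omega⟩
  set s := a + b with hs
  set p := a * aD with hp
  set π := (1 : R) - p with hπ
  set f0 := b ^ (mm + 1) * y with hf0
  set f := f0 * π with hf
  set v := s * π with hv
  set u := s * p with hu
  set c := s ^ (n1' + 1) with hc
  set K := mm + k + 1 + 1 with hK
  set n := (n1' + 1) * K with hn
  have hKK : (mm + 1) + (k + 1) ≤ K := by rw [hK]; omega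
  have hKn : (mm + 1) + (k + 1) ≤ n := by
    rw [hn]; exact le_trans hKK (Nat.le_mul_of_pos_left K (by omega))
  have hn1g : 1 ≤ n := le_trans (by omega) hKn
  obtain ⟨n'', hneq⟩ : ∃ q, n = q + 1 := ⟨n - 1, by omega⟩
  obtain ⟨t, ht1, ht2, ht3⟩ :=
    corner_core (p := p) (π := π) (f0 := f0) (f := f) (v := v)
      hk haD2 hy1 hp hπ hf0 hf (by rw [hv, hs]) n hKn
  set Z := z ^ K with hZ
  clear_value s p π f0 f v u c K n Z
  have hp2 : p * p = p := by rw [hp]; linear_combination a * haD2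
  have hπ2 : π * π = π := by rw [hπ]; linear_combination hp2
  have hpn : p ^ n = p := by rw [hneq]; exact idem_pow' hp2 n''
  have hπn : π ^ n = π := by rw [hneq]; exact idem_pow' hπ2 n''
  have hsc : s ^ n = c ^ K := by rw [hn, pow_mul, ← hc]
  have hEz : (c * z) * (c * z) = c * z := by linear_combination z * hz1
  have C3 : s ^ n * Z = c * z := by
    rw [hsc, hZ, ← mul_pow, hK]; exact idem_pow' hEz (mm + k + 1)
  have hczz : c * (z * z) = z := by linear_combination hz2
  have C4 : s ^ n * (Z * Z) = Z := by
    rw [hsc, hZ]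
    calc c ^ K * (z ^ K * z ^ K) = (c * (z * z)) ^ K := by rw [mul_pow, mul_pow]
    _ = z ^ K := by rw [hczz]
  have C5 : s ^ n * Z * s ^ n = s ^ n := by
    rw [hsc, hZ]
    calc c ^ K * z ^ K * c ^ K = (c * z * c) ^ K := by rw [mul_pow, mul_pow]
    _ = c ^ K := by rw [hz1]
  have hVs : v ^ n = s ^ n * π := by rw [hv, mul_pow, hπn]
  have hq's : (c * z) * s ^ n = s ^ n := by
    rw [hsc, hK]; linear_combination (c ^ (mm + k + 1)) * hz1
  have hft : f * t = t := by rw [mul_comm]; exact ht2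
  have eq1' : (Z * π) * (v ^ n * v ^ n) = v ^ n := by
    rw [hVs]
    linear_combination (s ^ n * π * π * π) * C3 + (π * π * π) * hq's + (s ^ n * (π + 1)) * hπ2
  have eq1 : (Z * π) * (v ^ n) ^ (1 + 1) = (v ^ n) ^ 1 := by
    rw [pow_one, show (1 + 1) = 2 from rfl, pow_two]; exact eq1'
  have eq2 : v ^ n * (Z * π) ^ 2 = Z * π := by
    rw [pow_two, hVs]
    linear_combination (π * π * π) * C4 + (Z * (π + 1)) * hπ2
  have eq3 : t * (v ^ n) ^ (1 + 1) = (v ^ n) ^ 1 := by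
    rw [pow_one, show (1 + 1) = 2 from rfl, pow_two]
    linear_combination (v ^ n) * ht1 + ht3
  have eq4 : v ^ n * t ^ 2 = t := by
    rw [pow_two]; linear_combination t * ht1 + hft
  have C8 : Z * π = t := cdrazin_unique (kx := 1) (ky := 1) eq1 eq2 eq3 eq4
  have C9' : v ^ n * (Z * π) = (c * z) * π := by
    rw [hVs]
    linear_combination (π * π) * C3 + (c * z) * hπ2
  have C9 : (c * z) * π = f := by rw [← C9', C8]; exact ht1
  have hUs : u ^ n = s ^ n * p := by rw [hu, mul_pow, hpn]
  have H1 : u ^ n * (Z * p) * u ^ n = u ^ n := by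
    rw [hUs]
    linear_combination (p * p * p) * C5 + (s ^ n * (p + 1)) * hp2
  have H2 : (Z * p) * u ^ n * (Z * p) = Z * p := by
    rw [hUs]
    linear_combination (p * p * p) * C4 + (Z * (p + 1)) * hp2
  have H3a : u ^ n * (Z * p) = (c * z) * p := by
    rw [hUs]
    linear_combination (p * p) * C3 + (c * z) * hp2
  have H3b : (c * z) * p = (c * z) - f := by
    linear_combination (c * z) * hπ - C9
  have H3 : u ^ n * (Z * p) = (c * z) - f := H3a.trans H3b
  have H4 : (Z * p) * u ^ n = (c * z) - f := by rw [mul_comm]; exact H3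
  exact ⟨n, hn1g, Z * p, c * z, f, H3, H4, H1, H2, rfl, rfl⟩

end CR



variable {A : Type*} [NormedRing A] [StarRing A] [NormedAlgebra ℂ A] [CompleteSpace A]

theorem stmt8 (a b aD : A) (ha : IsStarDMP a) (hb : IsStarDMP b)
    (haD : IsDrazin a aD)
    (hab : a * b = b * a)
    (h2 : (1 - a * aD) * (star a * b) = (1 - a * aD) * (b * star a)) :
    IsStarDMP (a + b) ↔ IsStarDMP ((a + b) * (a * aD)) := by
  obtain ⟨k, hk, haD2, haDc⟩ := haD
  obtain ⟨m0, hm0, y, hyMP, hyG⟩ := hb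
  obtain ⟨mm, rfl⟩ : ∃ mm, m0 = mm + 1 := ⟨m0 - 1, by omega⟩
  obtain ⟨na, hna, xa, hxaMP, hxaG⟩ := ha
  obtain ⟨j, rfl⟩ : ∃ q, na = q + 1 := ⟨na - 1, by omega⟩
  -- basic commutation facts
  have hdB : IsDrazin (b ^ (mm + 1)) y := isDrazin_of_groupInv hyG
  have hdA : IsDrazin (a ^ (j + 1)) xa := isDrazin_of_groupInv hxaG
  have cba : b * a = a * b := hab.symm
  have caD : b * aD = aD * b := drazin_comm ⟨k, hk, haD2, haDc⟩ cba
  have cabC : Commute a b := hab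
  have caDbC : Commute aD b := caD.symm
  have cya : a * y = y * a := drazin_comm hdB ((cabC.pow_right (mm + 1)).eq)
  have cyb : b * y = y * b := drazin_comm hdB (((Commute.refl b).pow_right (mm + 1)).eq)
  have cyaD : aD * y = y * aD := drazin_comm hdB ((caDbC.pow_right (mm + 1)).eq)
  have cxaa : a * xa = xa * a := drazin_comm hdA (((Commute.refl a).pow_right (j + 1)).eq)
  have cxaaD : aD * xa = xa * aD :=
    drazin_comm hdA (((show Commute aD a from haDc.symm).pow_right (j + 1)).eq)
  -- star (a * aD) = a * aD
  have haD_eq : aD = a ^ j * xa := by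
    have hcomm3 : ∀ u ∈ ({a, aD, xa} : Set A), ∀ v ∈ ({a, aD, xa} : Set A), u * v = v * u := by
      simp only [Set.mem_insert_iff, Set.mem_singleton_iff]
      rintro u (rfl | rfl | rfl) v (rfl | rfl | rfl) <;>
        first
          | rfl | exact haDc | exact haDc.symm | exact cxaa | exact cxaa.symm
          | exact cxaaD | exact cxaaD.symm
    letI : CommRing (Subring.closure ({a, aD, xa} : Set A)) :=
      Subring.closureCommRingOfComm hcomm3
    let a1 : Subring.closure ({a, aD, xa} : Set A) := ⟨a, Subring.subset_closure (by simp)⟩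
    let aD1 : Subring.closure ({a, aD, xa} : Set A) := ⟨aD, Subring.subset_closure (by simp)⟩
    let xa1 : Subring.closure ({a, aD, xa} : Set A) := ⟨xa, Subring.subset_closure (by simp)⟩
    have hk1 : aD1 * a1 ^ (k + 1) = a1 ^ k := by
      apply Subtype.ext
      simp only [MulMemClass.coe_mul, SubmonoidClass.coe_pow]
      exact hk
    have haD21 : a1 * aD1 ^ 2 = aD1 := by
      apply Subtype.ext
      simp only [MulMemClass.coe_mul, SubmonoidClass.coe_pow]
      exact haD2
    have hxa11 : a1 ^ (j + 1) * xa1 * a1 ^ (j + 1) = a1 ^ (j + 1) := by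
      apply Subtype.ext
      simp only [MulMemClass.coe_mul, SubmonoidClass.coe_pow]
      exact hxaG.1
    have hxa21 : xa1 * a1 ^ (j + 1) * xa1 = xa1 := by
      apply Subtype.ext
      simp only [MulMemClass.coe_mul, SubmonoidClass.coe_pow]
      exact hxaG.2.1
    have hD := cpow_drazin hxa11 hxa21
    have huniq : aD1 = a1 ^ j * xa1 := cdrazin_unique hk1 haD21 hD.1 hD.2
    have h5 := congrArg (Subtype.val) huniq
    simp only [MulMemClass.coe_mul, SubmonoidClass.coe_pow] at h5
    exact h5
  have hpstar : star (a * aD) = a * aD := by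
    rw [haD_eq, ← mul_assoc, ← pow_succ']
    exact hxaMP.2.2.1
  have cpf0 : (a * aD) * (b ^ (mm + 1) * y) = (b ^ (mm + 1) * y) * (a * aD) := by
    have c1 : Commute a (b ^ (mm + 1) * y) :=
      (cabC.pow_right _).mul_right (show Commute a y from cya)
    have c2 : Commute aD (b ^ (mm + 1) * y) :=
      (caDbC.pow_right _).mul_right (show Commute aD y from cyaD)
    exact (c1.mul_left c2).eq
  have hfA : star ((b ^ (mm + 1) * y) * (1 - a * aD)) = (b ^ (mm + 1) * y) * (1 - a * aD) := by
    rw [star_mul, star_sub, star_one, hpstar, hyMP.2.2.1, sub_mul, mul_sub, one_mul, mul_one,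
      cpf0]
  constructor
  · -- IsStarDMP (a+b) → IsStarDMP ((a+b)*(a*aD))
    rintro ⟨n1, hn11, z, hzMP, hzG⟩
    have hdS : IsDrazin ((a + b) ^ n1) z := isDrazin_of_groupInv hzG
    have cu : ∀ c : A, c * a = a * c → c * b = b * c →
        c * ((a + b) ^ n1) = ((a + b) ^ n1) * c := fun c h1 h2' =>
      (((show Commute c a from h1).add_right (show Commute c b from h2')).pow_right n1).eq
    have cza : a * z = z * a := drazin_comm hdS (cu a rfl hab)
    have czb : b * z = z * b := drazin_comm hdS (cu b cba rfl)
    have czaD : aD * z = z * aD := drazin_comm hdS (cu aD haDc.symm caD.symm)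
    have czy : y * z = z * y := drazin_comm hdS (cu y cya.symm cyb.symm)
    have hcomm5 : ∀ u ∈ ({a, b, aD, y, z} : Set A), ∀ v ∈ ({a, b, aD, y, z} : Set A),
        u * v = v * u := by
      simp only [Set.mem_insert_iff, Set.mem_singleton_iff]
      rintro u (rfl | rfl | rfl | rfl | rfl) v (rfl | rfl | rfl | rfl | rfl) <;>
        first
          | rfl | exact hab | exact hab.symm | exact haDc | exact haDc.symm
          | exact caD | exact caD.symm | exact cya | exact cya.symm
          | exact cyb | exact cyb.symm | exact cyaD | exact cyaD.symm
          | exact cza | exact cza.symm | exact czb | exact czb.symm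
          | exact czaD | exact czaD.symm | exact czy | exact czy.symm
    letI : CommRing (Subring.closure ({a, b, aD, y, z} : Set A)) :=
      Subring.closureCommRingOfComm hcomm5
    let a' : Subring.closure ({a, b, aD, y, z} : Set A) := ⟨a, Subring.subset_closure (by simp)⟩
    let b' : Subring.closure ({a, b, aD, y, z} : Set A) := ⟨b, Subring.subset_closure (by simp)⟩
    let aD' : Subring.closure ({a, b, aD, y, z} : Set A) := ⟨aD, Subring.subset_closure (by simp)⟩
    let y' : Subring.closure ({a, b, aD, y, z} : Set A) := ⟨y, Subring.subset_closure (by simp)⟩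
    let z' : Subring.closure ({a, b, aD, y, z} : Set A) := ⟨z, Subring.subset_closure (by simp)⟩
    have hk' : aD' * a' ^ (k + 1) = a' ^ k := by
      apply Subtype.ext
      simp only [MulMemClass.coe_mul, SubmonoidClass.coe_pow]
      exact hk
    have haD2' : a' * aD' ^ 2 = aD' := by
      apply Subtype.ext
      simp only [MulMemClass.coe_mul, SubmonoidClass.coe_pow]
      exact haD2
    have hy1' : b' ^ (mm + 1) * y' * b' ^ (mm + 1) = b' ^ (mm + 1) := by
      apply Subtype.ext
      simp only [MulMemClass.coe_mul, SubmonoidClass.coe_pow]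
      exact hyG.1
    have hz1' : (a' + b') ^ n1 * z' * (a' + b') ^ n1 = (a' + b') ^ n1 := by
      apply Subtype.ext
      simp only [MulMemClass.coe_mul, SubmonoidClass.coe_pow, AddMemClass.coe_add]
      exact hzG.1
    have hz2' : z' * (a' + b') ^ n1 * z' = z' := by
      apply Subtype.ext
      simp only [MulMemClass.coe_mul, SubmonoidClass.coe_pow, AddMemClass.coe_add]
      exact hzG.2.1
    obtain ⟨n, hn1g, W', Q', F', P1, P2, P3, P4, PQ, PF⟩ :=
      conv_pack a' b' aD' y' z' k mm n1 hk' haD2' hy1' hz1' hz2' hn11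
    have L1 := congrArg (Subtype.val) P1
    have L2 := congrArg (Subtype.val) P2
    have L3 := congrArg (Subtype.val) P3
    have L4 := congrArg (Subtype.val) P4
    have LQ := congrArg (Subtype.val) PQ
    have LF := congrArg (Subtype.val) PF
    simp only [MulMemClass.coe_mul, SubmonoidClass.coe_pow, AddMemClass.coe_add,
      AddSubgroupClass.coe_sub, OneMemClass.coe_one] at L1 L2 L3 L4 LQ LF
    have SQ : star (Q' : A) = (Q' : A) := by rw [LQ]; exact hzMP.2.2.1
    have SF : star (F' : A) = (F' : A) := by rw [LF]; exact hfA
    refine ⟨n, hn1g, (W' : A), ⟨L3, L4, ?_, ?_⟩, L3, L4, ?_⟩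
    · rw [L1, star_sub, SQ, SF]
    · rw [L2, star_sub, SQ, SF]
    · rw [L1, L2]
  · -- IsStarDMP ((a+b)*(a*aD)) → IsStarDMP (a+b)
    rintro ⟨n0, hn01, x, hxMP, hxG⟩
    have hdU : IsDrazin (((a + b) * (a * aD)) ^ n0) x := isDrazin_of_groupInv hxG
    have cu : ∀ c : A, c * a = a * c → c * b = b * c → c * aD = aD * c →
        c * (((a + b) * (a * aD)) ^ n0) = (((a + b) * (a * aD)) ^ n0) * c := fun c h1 h2' h3 =>
      ((((show Commute c a from h1).add_right (show Commute c b from h2')).mul_right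
        ((show Commute c a from h1).mul_right (show Commute c aD from h3))).pow_right n0).eq
    have cxa : a * x = x * a := drazin_comm hdU (cu a rfl hab haDc)
    have cxb : b * x = x * b := drazin_comm hdU (cu b cba rfl caD)
    have cxaD : aD * x = x * aD := drazin_comm hdU (cu aD haDc.symm caD.symm rfl)
    have cxy : y * x = x * y := drazin_comm hdU (cu y cya.symm cyb.symm cyaD.symm)
    have hcomm5 : ∀ u ∈ ({a, b, aD, y, x} : Set A), ∀ v ∈ ({a, b, aD, y, x} : Set A),
        u * v = v * u := by
      simp only [Set.mem_insert_iff, Set.mem_singleton_iff]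
      rintro u (rfl | rfl | rfl | rfl | rfl) v (rfl | rfl | rfl | rfl | rfl) <;>
        first
          | rfl | exact hab | exact hab.symm | exact haDc | exact haDc.symm
          | exact caD | exact caD.symm | exact cya | exact cya.symm
          | exact cyb | exact cyb.symm | exact cyaD | exact cyaD.symm
          | exact cxa | exact cxa.symm | exact cxb | exact cxb.symm
          | exact cxaD | exact cxaD.symm | exact cxy | exact cxy.symm
    letI : CommRing (Subring.closure ({a, b, aD, y, x} : Set A)) :=
      Subring.closureCommRingOfComm hcomm5
    let a' : Subring.closure ({a, b, aD, y, x} : Set A) := ⟨a, Subring.subset_closure (by simp)⟩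
    let b' : Subring.closure ({a, b, aD, y, x} : Set A) := ⟨b, Subring.subset_closure (by simp)⟩
    let aD' : Subring.closure ({a, b, aD, y, x} : Set A) := ⟨aD, Subring.subset_closure (by simp)⟩
    let y' : Subring.closure ({a, b, aD, y, x} : Set A) := ⟨y, Subring.subset_closure (by simp)⟩
    let x' : Subring.closure ({a, b, aD, y, x} : Set A) := ⟨x, Subring.subset_closure (by simp)⟩
    have hk' : aD' * a' ^ (k + 1) = a' ^ k := by
      apply Subtype.ext
      simp only [MulMemClass.coe_mul, SubmonoidClass.coe_pow]
      exact hk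
    have haD2' : a' * aD' ^ 2 = aD' := by
      apply Subtype.ext
      simp only [MulMemClass.coe_mul, SubmonoidClass.coe_pow]
      exact haD2
    have hy1' : b' ^ (mm + 1) * y' * b' ^ (mm + 1) = b' ^ (mm + 1) := by
      apply Subtype.ext
      simp only [MulMemClass.coe_mul, SubmonoidClass.coe_pow]
      exact hyG.1
    have hx1' : ((a' + b') * (a' * aD')) ^ n0 * x' * ((a' + b') * (a' * aD')) ^ n0 =
        ((a' + b') * (a' * aD')) ^ n0 := by
      apply Subtype.ext
      simp only [MulMemClass.coe_mul, SubmonoidClass.coe_pow, AddMemClass.coe_add]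
      exact hxG.1
    have hx2' : x' * ((a' + b') * (a' * aD')) ^ n0 * x' = x' := by
      apply Subtype.ext
      simp only [MulMemClass.coe_mul, SubmonoidClass.coe_pow, AddMemClass.coe_add]
      exact hxG.2.1
    obtain ⟨n, hn1g, W', F', P1, P2, P3, P4, PF⟩ :=
      fwd_pack a' b' aD' y' x' k mm n0 hk' haD2' hy1' hx1' hx2' hn01
    have L1 := congrArg (Subtype.val) P1
    have L2 := congrArg (Subtype.val) P2
    have L3 := congrArg (Subtype.val) P3
    have L4 := congrArg (Subtype.val) P4
    have LF := congrArg (Subtype.val) PF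
    simp only [MulMemClass.coe_mul, SubmonoidClass.coe_pow, AddMemClass.coe_add,
      AddSubgroupClass.coe_sub, OneMemClass.coe_one] at L1 L2 L3 L4 LF
    have SF : star (F' : A) = (F' : A) := by rw [LF]; exact hfA
    refine ⟨n, hn1g, (W' : A), ⟨L3, L4, ?_, ?_⟩, L3, L4, ?_⟩
    · rw [L1, star_add, hxMP.2.2.1, SF]
    · rw [L2, star_add, hxMP.2.2.1, SF]
    · rw [L1, L2]
end
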